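/- If X is an n×n matrix with trace zero and N is a symmetric n×n matrix of commuting polynomial variables, then the derivation sending each entry n_{ij} to the (i,j) entry of X·N + N·Xᵀ annihilates det(N). -/

import Mathlib

open Matrix MvPolynomial

theorem derivation_finset_prod_aux {R S ι : Type*} [CommRing R] [CommRing S] [Algebra R S] [DecidableEq ι]
    (D : Derivation R S S) (s : Finset ι) (f : ι → S) :
    D (∏ i ∈ s, f i) = ∑ i ∈ s, D (f i) * ∏ j ∈ s.erase i, f j := by
  classical
  induction s using Finset.induction_on with
  | empty => simp
  | @insert a s ha ih =>
    rw [Finset.prod_insert ha, D.leibniz, ih, Finset.sum_insert ha,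
      Finset.erase_insert ha]
    simp only [smul_eq_mul]
    rw [Finset.mul_sum, add_comm]
    congr 1
    · exact mul_comm _ _
    refine Finset.sum_congr rfl fun i hi => ?_
    rw [Finset.erase_insert_of_ne (by rintro rfl; exact ha hi),
      Finset.prod_insert (by simp [ha, Finset.mem_erase])]
    ring

theorem deriv_det {R S : Type*} [CommRing R] [CommRing S] [Algebra R S] {n : ℕ}
    (D : Derivation R S S) (A : Matrix (Fin n) (Fin n) S) :
    D A.det = (adjugate A * A.map (fun x => D x)).trace := by
  classical
  have zsm : ∀ (c : ℤ) (p : S), D ((c : S) * p) = (c : S) * D p := by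
    intro c p
    rw [← zsmul_eq_mul, ← zsmul_eq_mul]
    exact map_zsmul D c p
  have hprod : ∀ (i : Fin n) (σ : Equiv.Perm (Fin n)),
      (∏ j, (A.updateCol i fun k => D (A k i)) (σ j) j)
        = D (A (σ i) i) * ∏ j ∈ Finset.univ.erase i, A (σ j) j := by
    intro i σ
    rw [← Finset.mul_prod_erase Finset.univ _ (Finset.mem_univ i)]
    congr 1
    · simp [Matrix.updateCol_apply]
    · refine Finset.prod_congr rfl fun j hj => ?_
      rw [Matrix.updateCol_apply, if_neg (Finset.mem_erase.mp hj).1]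
  have hRHS : (adjugate A * A.map (fun x => D x)).trace
      = ∑ i, (A.updateCol i fun k => D (A k i)).det := by
    rw [Matrix.trace]
    refine Finset.sum_congr rfl fun i _ => ?_
    rw [← Matrix.cramer_apply, Matrix.cramer_eq_adjugate_mulVec]
    simp [Matrix.diag, Matrix.mul_apply, Matrix.mulVec, dotProduct,
      Matrix.map_apply]
  rw [hRHS]
  have hcol : ∀ i : Fin n, (A.updateCol i fun k => D (A k i)).det
      = ∑ σ : Equiv.Perm (Fin n), ((Equiv.Perm.sign σ : ℤ) : S)
          * (D (A (σ i) i) * ∏ j ∈ Finset.univ.erase i, A (σ j) j) := by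
    intro i
    rw [Matrix.det_apply']
    exact Finset.sum_congr rfl fun σ _ => by rw [hprod i σ]
  calc D A.det
      = ∑ σ : Equiv.Perm (Fin n), ((Equiv.Perm.sign σ : ℤ) : S)
          * ∑ i, D (A (σ i) i) * ∏ j ∈ Finset.univ.erase i, A (σ j) j := by
        rw [Matrix.det_apply', map_sum]
        refine Finset.sum_congr rfl fun σ _ => ?_
        rw [zsm, derivation_finset_prod_aux]
    _ = ∑ σ : Equiv.Perm (Fin n), ∑ i, ((Equiv.Perm.sign σ : ℤ) : S)
          * (D (A (σ i) i) * ∏ j ∈ Finset.univ.erase i, A (σ j) j) := by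
        simp [Finset.mul_sum]
    _ = ∑ i, ∑ σ : Equiv.Perm (Fin n), ((Equiv.Perm.sign σ : ℤ) : S)
          * (D (A (σ i) i) * ∏ j ∈ Finset.univ.erase i, A (σ j) j) :=
        Finset.sum_comm
    _ = ∑ i, (A.updateCol i fun k => D (A k i)).det := by
        exact Finset.sum_congr rfl fun i _ => (hcol i).symm

/-- Infinitesimal `SL_n`-invariance of the determinant of a symmetric matrix of
independent variables: if `X` is traceless and `D` is the derivation of the polynomial
ring in the variables `n_{ij}` (indexed by unordered pairs, so that the matrix `N` of
variables is symmetric) with `D(n_{ij}) = (X·N + N·Xᵀ)_{ij}`, then `D (det N) = 0`. -/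
theorem stmt_1 {K : Type*} [Field K] {n : ℕ}
    (M : Matrix (Fin n) (Fin n) K) (hM : M.trace = 0)
    (N R : Matrix (Fin n) (Fin n) (MvPolynomial (Sym2 (Fin n)) K))
    (hN : ∀ i j, N i j = MvPolynomial.X (Sym2.mk i j))
    (hR : R = M.map MvPolynomial.C * N + N * (M.map MvPolynomial.C)ᵀ)
    (D : Derivation K (MvPolynomial (Sym2 (Fin n)) K) (MvPolynomial (Sym2 (Fin n)) K))
    (hD : ∀ i j : Fin n, D (MvPolynomial.X (Sym2.mk i j)) = R i j) :
    D N.det = 0 := by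
  have hND : N.map (fun x => D x) = R := by
    ext i j
    rw [Matrix.map_apply, hN i j, hD i j]
  set M' := M.map (MvPolynomial.C : K →+* MvPolynomial (Sym2 (Fin n)) K) with hM'
  have htrM' : M'.trace = 0 := by
    simp only [hM', Matrix.trace, Matrix.diag, Matrix.map_apply]
    rw [← map_sum]
    have : ∑ i, M i i = M.trace := rfl
    rw [this, hM, map_zero]
  rw [deriv_det D N, hND, hR, mul_add, Matrix.trace_add]
  have h1 : (adjugate N * (M' * N)).trace = 0 := by
    rw [Matrix.trace_mul_comm, Matrix.mul_assoc, Matrix.mul_adjugate,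
      Matrix.mul_smul, Matrix.mul_one, Matrix.trace_smul, htrM', smul_zero]
  have h2 : (adjugate N * (N * M'ᵀ)).trace = 0 := by
    rw [← Matrix.mul_assoc, Matrix.adjugate_mul, Matrix.smul_mul, Matrix.one_mul,
      Matrix.trace_smul, Matrix.trace_transpose, htrM', smul_zero]
  rw [h1, h2, add_zero]
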